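/- Define the Sierpinski matrices over a field F by B_0 = (1) and B_{n+1} = [[B_n, B_n],[0, B_n]]. Then B_n is a 2^n × 2^n matrix with single eigenvalue 1, and over a field of characteristic 0, the nilpotent index of B_n - I is n + 1. -/

import Mathlib

open Matrix

/-- The `n`-th Sierpinski matrix: `B 0 = (1)` and `B (n+1) = [[B n, B n], [0, B n]]`. -/
def sierpinski (F : Type*) [Zero F] [One F] : (n : ℕ) → Matrix (Fin (2 ^ n)) (Fin (2 ^ n)) F
  | 0 => 1
  | n + 1 =>
    Matrix.reindex (finSumFinEquiv.trans (finCongr (by rw [pow_succ, mul_two])))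
      (finSumFinEquiv.trans (finCongr (by rw [pow_succ, mul_two])))
      (Matrix.fromBlocks (sierpinski F n) (sierpinski F n) 0 (sierpinski F n))

private lemma pow_fromBlocks_aux {F : Type*} [Field F] {m : Type*} [Fintype m] [DecidableEq m]
    (B : Matrix m m F) (k : ℕ) :
    (fromBlocks (B - 1) B 0 (B - 1)) ^ (k + 1) =
      fromBlocks ((B - 1) ^ (k + 1)) ((k + 1) • (B * (B - 1) ^ k)) 0 ((B - 1) ^ (k + 1)) := by
  induction k with
  | zero => simp
  | succ k ih =>
    have hc : (B - 1) ^ (k + 1) * B = B * (B - 1) ^ (k + 1) :=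
      ((Commute.refl B).sub_left (Commute.one_left B)).pow_left (k + 1) |>.eq
    have h12 : (B - 1) ^ (k + 1) * B + (k + 1) • (B * (B - 1) ^ k) * (B - 1) =
        (k + 1 + 1) • (B * (B - 1) ^ (k + 1)) := by
      rw [smul_mul_assoc, mul_assoc, ← pow_succ, hc,
        succ_nsmul (B * (B - 1) ^ (k + 1)) (k + 1), add_comm]
    rw [pow_succ, ih, fromBlocks_multiply]
    simp only [Matrix.mul_zero, Matrix.zero_mul, add_zero, zero_add, ← pow_succ, h12]

private lemma sierpinski_nilpotent {F : Type*} [Field F] [CharZero F] (n : ℕ) :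
    (sierpinski F n - 1) ^ (n + 1) = 0 ∧ (sierpinski F n - 1) ^ n ≠ 0 := by
  induction n with
  | zero =>
    constructor
    · show (sierpinski F 0 - 1) ^ 1 = 0
      simp [sierpinski]
    · simp [sierpinski]
  | succ n ih =>
    obtain ⟨h0, h1⟩ := ih
    have hpf : 2 ^ n + 2 ^ n = 2 ^ (n + 1) := by rw [pow_succ, mul_two]
    set e : Fin (2 ^ n) ⊕ Fin (2 ^ n) ≃ Fin (2 ^ (n + 1)) :=
      finSumFinEquiv.trans (finCongr hpf) with he
    set B := sierpinski F n with hB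
    have hs : sierpinski F (n + 1) = reindexAlgEquiv F F e (fromBlocks B B 0 B) := by
      rw [reindexAlgEquiv_apply]; rfl
    have key : ∀ k : ℕ, (sierpinski F (n + 1) - 1) ^ (k + 1) =
        reindexAlgEquiv F F e
          (fromBlocks ((B - 1) ^ (k + 1)) ((k + 1) • (B * (B - 1) ^ k)) 0 ((B - 1) ^ (k + 1))) := by
      intro k
      rw [hs, ← _root_.map_one (reindexAlgEquiv F F e), ← map_sub, ← map_pow,
        ← pow_fromBlocks_aux]
      congr 2
      rw [← fromBlocks_one]
      ext (i | i) (j | j) <;> simp [Matrix.sub_apply, Matrix.one_apply]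
    constructor
    · rw [key (n + 1), pow_succ (B - 1) (n + 1), h0]
      simp
    · rw [key n]
      intro hcon
      have h2 : fromBlocks ((B - 1) ^ (n + 1)) ((n + 1) • (B * (B - 1) ^ n)) 0
          ((B - 1) ^ (n + 1)) = 0 :=
        (reindexAlgEquiv F F e).injective (by rw [hcon, map_zero])
      have h3 : (n + 1 : ℕ) • (B * (B - 1) ^ n) = 0 := by
        have := congrArg Matrix.toBlocks₁₂ (h2.trans Matrix.fromBlocks_zero.symm)
        simp only [Matrix.toBlocks_fromBlocks₁₂] at this
        simpa [Matrix.toBlocks_fromBlocks₁₂] using this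
      have hBN : B * (B - 1) ^ n = (B - 1) ^ n := by
        have hb : B * (B - 1) ^ n = (B - 1) * (B - 1) ^ n + (B - 1) ^ n := by noncomm_ring
        rw [hb, ← pow_succ', h0, zero_add]
      rw [hBN, ← Nat.cast_smul_eq_nsmul F] at h3
      rcases smul_eq_zero.mp h3 with h | h
      · exact Nat.cast_ne_zero.mpr (Nat.succ_ne_zero n) h
      · exact h1 h

/-- The Sierpinski matrix `B n` has the single eigenvalue `1`, and over a field of
characteristic zero the nilpotent index of `B n - I` is `n + 1`. -/
theorem sierpinski_single_eigenvalue_and_index {F : Type*} [Field F] [CharZero F] (n : ℕ) :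
    (∀ μ : F, (∃ v : Fin (2 ^ n) → F, v ≠ 0 ∧ (sierpinski F n).mulVec v = μ • v) → μ = 1) ∧
    (sierpinski F n - 1) ^ (n + 1) = 0 ∧ (sierpinski F n - 1) ^ n ≠ 0 := by
  obtain ⟨h0, h1⟩ := sierpinski_nilpotent (F := F) n
  refine ⟨?_, h0, h1⟩
  rintro μ ⟨v, hv, hμ⟩
  have hstep : (sierpinski F n - 1).mulVec v = (μ - 1) • v := by
    rw [sub_mulVec, hμ, sub_smul, one_smul, Matrix.one_mulVec]
  have hpow : ∀ k : ℕ, ((sierpinski F n - 1) ^ k).mulVec v = (μ - 1) ^ k • v := by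
    intro k
    induction k with
    | zero => simp
    | succ k ih =>
      rw [pow_succ', ← Matrix.mulVec_mulVec, ih, Matrix.mulVec_smul, hstep, pow_succ',
        smul_smul]
      rw [mul_comm]
  have hv0 := hpow (n + 1)
  rw [h0, Matrix.zero_mulVec] at hv0
  have hz : (μ - 1) ^ (n + 1) = 0 := by
    by_contra h
    exact hv (by
      have := congrArg (fun w => ((μ - 1) ^ (n + 1))⁻¹ • w) hv0.symm
      simpa [smul_smul, inv_mul_cancel₀ h] using this)
  have := pow_eq_zero_iff (Nat.succ_ne_zero n) |>.mp hz
  exact sub_eq_zero.mp this
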